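/- Let σ be a permutation of {1,...,p} with gcd(p, q_1, q_2) = 1, 0 < q_1 < q_2 < p, whose steps σ(j) - j mod p all lie in {0, q_1, q_2}. For each non-trivial cycle C_i of σ, let r_i and s_i be its numbers of q_1-steps and q_2-steps, and l_i = (r_i q_1 + s_i q_2)/p. Then gcd(r_i, s_i, l_i) = 1 for each i. -/

import Mathlib

open Finset

/-- Sign persistence for integer sequences with steps of size at most 1. -/
lemma sign_persist (h : ℕ → ℤ) (hstep : ∀ k, h k - 1 ≤ h (k+1) ∧ h (k+1) ≤ h k + 1)
    (N : ℕ) (hne : ∀ k, k ≤ N → h k ≠ 0) (h0 : 0 < h 0) : ∀ k ≤ N, 0 < h k := by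
  intro k
  induction k with
  | zero => intro _; exact h0
  | succ k ih =>
    intro hk
    have h1 := ih (Nat.le_of_succ_le hk)
    have h2 := hstep k
    have h3 := hne (k+1) hk
    omega

lemma exists_zero (h : ℕ → ℤ) (hstep : ∀ k, h k - 1 ≤ h (k+1) ∧ h (k+1) ≤ h k + 1)
    (N : ℕ) (hne : ∀ k, k ≤ N → h k ≠ 0) :
    (∀ k ≤ N, 0 < h k) ∨ (∀ k ≤ N, h k < 0) := by
  rcases lt_or_gt_of_ne (hne 0 (Nat.zero_le _)) with h0 | h0
  · right
    have := sign_persist (fun k => -h k)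
      (fun k => ⟨show -h k - 1 ≤ -h (k+1) by have := hstep k; omega,
                 show -h (k+1) ≤ -h k + 1 by have := hstep k; omega⟩)
      N (fun k hk => show -h k ≠ 0 by have := hne k hk; omega)
      (show (0:ℤ) < -h 0 by omega)
    intro k hk
    have h2 : 0 < -h k := this k hk
    omega
  · left; exact sign_persist h hstep N hne h0

lemma key (p q₁ q₂ n l : ℕ) (hp : 0 < p) (hn : 0 < n)
    (P : ℕ → ℕ) (hP0 : P 0 = 0) (hPstep : ∀ k, P (k+1) = P k ∨ P (k+1) = P k + 1)
    (S : ℕ → ℕ) (hS : ∀ k, S k = P k * q₁ + (k - P k) * q₂)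
    (hinj : ∀ i < n, ∀ j < n, ((S i : ZMod p) = (S j : ZMod p)) → i = j)
    (hl : S n = l * p) :
    Nat.gcd (P n) (Nat.gcd (n - P n) l) = 1 := by
  have hPle : ∀ k, P k ≤ k := by
    intro k
    induction k with
    | zero => omega
    | succ k ih => rcases hPstep k with h | h <;> omega
  set r := P n with hr
  set s := n - P n with hs
  set d := Nat.gcd r (Nat.gcd s l) with hd
  by_contra hd1
  have hdr : d ∣ r := Nat.gcd_dvd_left _ _
  have hds : d ∣ s := (Nat.gcd_dvd_right r (Nat.gcd s l)).trans (Nat.gcd_dvd_left s l)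
  have hdl : d ∣ l := (Nat.gcd_dvd_right r (Nat.gcd s l)).trans (Nat.gcd_dvd_right s l)
  have hrsn : r + s = n := by have := hPle n; omega
  have hd0 : d ≠ 0 := by
    intro h0
    rw [h0] at hdr hds
    have : r = 0 := Nat.eq_zero_of_zero_dvd hdr
    have : s = 0 := Nat.eq_zero_of_zero_dvd hds
    omega
  have hd2 : 2 ≤ d := by omega
  obtain ⟨a, ha⟩ := hdr
  obtain ⟨b, hb⟩ := hds
  obtain ⟨l', hl'⟩ := hdl
  set m := a + b with hm
  have hnm : n = d * m := by rw [hm, Nat.mul_add, ← ha, ← hb]; omega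
  have hm0 : 0 < m := by
    rcases Nat.eq_zero_or_pos m with h0 | h0
    · rw [h0, Nat.mul_zero] at hnm; omega
    · exact h0
  -- a*q₁ + b*q₂ = l'*p
  have hSn : S n = r * q₁ + s * q₂ := by rw [hS n]
  have habl : a * q₁ + b * q₂ = l' * p := by
    have : d * (a * q₁ + b * q₂) = d * (l' * p) := by
      calc d * (a * q₁ + b * q₂) = (d * a) * q₁ + (d * b) * q₂ := by ring
      _ = r * q₁ + s * q₂ := by rw [← ha, ← hb]
      _ = S n := hSn.symm
      _ = l * p := hl
      _ = d * (l' * p) := by rw [hl']; ring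
    exact Nat.eq_of_mul_eq_mul_left (by omega) this
  -- the discrete IVT argument
  set h : ℕ → ℤ := fun k => (P (k + m) : ℤ) - (P k : ℤ) - (a : ℤ) with hh
  have hstep : ∀ k, h k - 1 ≤ h (k+1) ∧ h (k+1) ≤ h k + 1 := by
    intro k
    have e1 := hPstep (k + m)
    have e2 := hPstep k
    simp only [hh]
    have : k + 1 + m = (k + m) + 1 := by omega
    rw [this]
    rcases e1 with e1 | e1 <;> rcases e2 with e2 | e2 <;> rw [e1, e2] <;> push_cast <;> omega
  have hsum : ∑ i ∈ range d, h (i * m) = 0 := by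
    have : ∀ i ∈ range d, h (i * m) =
        ((fun i => (P (i * m) : ℤ)) (i + 1) - (fun i => (P (i * m) : ℤ)) i) - (a : ℤ) := by
      intro i _
      simp only [hh]
      have : i * m + m = (i + 1) * m := by ring
      rw [this]
    rw [Finset.sum_congr rfl this, Finset.sum_sub_distrib, Finset.sum_range_sub
      (fun i => (P (i * m) : ℤ))]
    have e1 : P (d * m) = d * a := by rw [← hnm, ← hr, ha]
    simp only [Nat.zero_mul, hP0, e1, Finset.sum_const, Finset.card_range, nsmul_eq_mul]
    push_cast
    ring
  -- there is a zero of h in [0, (d-1)*m]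
  have hzero : ∃ k ≤ (d - 1) * m, h k = 0 := by
    by_contra hno
    push_neg at hno
    rcases exists_zero h hstep ((d - 1) * m) (fun k hk => hno k hk) with hpos | hneg
    · have : 0 < ∑ i ∈ range d, h (i * m) := by
        apply Finset.sum_pos
        · intro i hi
          exact hpos (i * m) (Nat.mul_le_mul_right m (by simp at hi; omega))
        · exact ⟨0, by simp; omega⟩
      omega
    · have : ∑ i ∈ range d, h (i * m) < 0 := by
        apply Finset.sum_neg
        · intro i hi
          exact hneg (i * m) (Nat.mul_le_mul_right m (by simp at hi; omega))
        · exact ⟨0, by simp; omega⟩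
      omega
  obtain ⟨k₀, hk₀le, hk₀⟩ := hzero
  have hPk₀ : P (k₀ + m) = P k₀ + a := by
    simp only [hh] at hk₀
    omega
  have hk₀m_le : k₀ + m ≤ n := by
    have : (d - 1) * m + m = d * m := by
      have : d - 1 + 1 = d := by omega
      calc (d - 1) * m + m = (d - 1 + 1) * m := by ring
      _ = d * m := by rw [this]
    omega
  -- S (k₀ + m) = S k₀ + (a*q₁ + b*q₂)
  have hSshift : S (k₀ + m) = S k₀ + (a * q₁ + b * q₂) := by
    rw [hS (k₀ + m), hS k₀, hPk₀]
    have h1 : P k₀ ≤ k₀ := hPle k₀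
    have h2 : k₀ + m - (P k₀ + a) = (k₀ - P k₀) + b := by omega
    rw [h2]
    ring
  have hcast : ((S (k₀ + m) : ZMod p)) = ((S k₀ : ZMod p)) := by
    rw [hSshift, habl]
    push_cast
    simp [ZMod.natCast_self]
  rcases Nat.lt_or_ge (k₀ + m) n with hlt | hge
  · have hk₀n : k₀ < n := by omega
    have := hinj (k₀ + m) hlt k₀ hk₀n hcast
    omega
  · have heq : k₀ + m = n := le_antisymm hk₀m_le hge
    have hS0 : (S 0 : ZMod p) = 0 := by rw [hS 0, hP0]; simp
    have hSnz : (S n : ZMod p) = 0 := by rw [hl]; push_cast; simp [ZMod.natCast_self]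
    have hk₀n : k₀ < n := by omega
    have hcast2 : ((S k₀ : ZMod p)) = ((S 0 : ZMod p)) := by
      rw [hS0, ← hSnz, ← heq, hcast]
    have := hinj k₀ hk₀n 0 hn hcast2
    -- k₀ = 0, so m = n, so d * m = m, so d = 1
    have : m = n := by omega
    have : d * m = m := by omega
    have : d = 1 := by
      have := Nat.eq_of_mul_eq_mul_right hm0 (by omega : d * m = 1 * m)
      omega
    omega

theorem stmt_9 (p q₁ q₂ : ℕ) (h₁ : 0 < q₁) (h₁₂ : q₁ < q₂) (h₂p : q₂ < p)
    (hgcd : Nat.gcd p (Nat.gcd q₁ q₂) = 1)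
    (σ : Equiv.Perm (Fin p))
    (hσ : ∀ j : Fin p,
      (((σ j : ℕ) : ZMod p) - ((j : ℕ) : ZMod p) = 0) ∨
      (((σ j : ℕ) : ZMod p) - ((j : ℕ) : ZMod p) = (q₁ : ZMod p)) ∨
      (((σ j : ℕ) : ZMod p) - ((j : ℕ) : ZMod p) = (q₂ : ZMod p))) :
    ∀ c ∈ σ.cycleFactorsFinset,
      Nat.gcd
        ((c.support.filter fun j : Fin p =>
          ((σ j : ℕ) : ZMod p) - ((j : ℕ) : ZMod p) = (q₁ : ZMod p)).card)
        (Nat.gcd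
          ((c.support.filter fun j : Fin p =>
            ((σ j : ℕ) : ZMod p) - ((j : ℕ) : ZMod p) = (q₂ : ZMod p)).card)
          (((c.support.filter fun j : Fin p =>
              ((σ j : ℕ) : ZMod p) - ((j : ℕ) : ZMod p) = (q₁ : ZMod p)).card * q₁
            + (c.support.filter fun j : Fin p =>
              ((σ j : ℕ) : ZMod p) - ((j : ℕ) : ZMod p) = (q₂ : ZMod p)).card * q₂) / p))
      = 1 := by
  intro c hc
  classical
  haveI : NeZero p := ⟨by omega⟩
  have hp : 0 < p := by omega
  have hcyc : c.IsCycle := (Equiv.Perm.mem_cycleFactorsFinset_iff.mp hc).1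
  obtain ⟨x, hx⟩ := hcyc.nonempty_support
  set n := c.support.card with hn
  have hn0 : 0 < n := Finset.card_pos.mpr ⟨x, hx⟩
  have hcx : c = σ.cycleOf x := Equiv.Perm.cycle_is_cycleOf hx hc
  set f : ℕ → Fin p := fun k => (σ ^ k) x with hf
  have hfc : ∀ k, (c ^ k) x = f k := by
    intro k; rw [hcx]; exact Equiv.Perm.cycleOf_pow_apply_self σ x k
  have hco : σ.IsCycleOn c.support :=
    Equiv.Perm.isCycleOn_support_of_mem_cycleFactorsFinset hc
  have hinj : ∀ i < n, ∀ j < n, f i = f j → i = j := by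
    intro i hi j hj hij
    have := (hco.pow_apply_eq_pow_apply hx).mp hij
    exact (Nat.mod_eq_of_lt hi).symm.trans ((show i % n = j % n from this).trans (Nat.mod_eq_of_lt hj))
  have hmem : ∀ k, f k ∈ c.support := by
    intro k
    rw [← hfc k]
    exact Equiv.Perm.pow_apply_mem_support.mpr hx
  have himage : (Finset.range n).image f = c.support := by
    apply Finset.eq_of_subset_of_card_le
    · intro y hy
      obtain ⟨k, _, rfl⟩ := Finset.mem_image.mp hy
      exact hmem k
    · rw [Finset.card_image_of_injOn
        (fun i hi j hj => hinj i (Finset.mem_range.mp hi) j (Finset.mem_range.mp hj)),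
        Finset.card_range]
  have hfs : ∀ k, σ (f k) = f (k + 1) := by
    intro k
    simp only [hf, pow_succ', Equiv.Perm.mul_apply]
  have hcastinj : ∀ u v : Fin p, ((u : ℕ) : ZMod p) = ((v : ℕ) : ZMod p) → u = v := by
    intro u v h
    have := congrArg ZMod.val h
    rw [ZMod.val_cast_of_lt u.isLt, ZMod.val_cast_of_lt v.isLt] at this
    exact Fin.ext this
  have hq12 : (q₁ : ZMod p) ≠ (q₂ : ZMod p) := by
    intro h
    have := congrArg ZMod.val h
    rw [ZMod.val_cast_of_lt (by omega), ZMod.val_cast_of_lt h₂p] at this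
    omega
  have hcsupp : ∀ j ∈ c.support, j ∈ σ.support :=
    fun j hj => Equiv.Perm.mem_cycleFactorsFinset_support_le hc hj
  have hstepA : ∀ j ∈ c.support,
      (((σ j : ℕ) : ZMod p) - ((j : ℕ) : ZMod p) = (q₁ : ZMod p)) ∨
      (((σ j : ℕ) : ZMod p) - ((j : ℕ) : ZMod p) = (q₂ : ZMod p)) := by
    intro j hj
    rcases hσ j with h0 | h1 | h2
    · exfalso
      have : σ j = j := hcastinj _ _ (sub_eq_zero.mp h0)
      exact (Equiv.Perm.mem_support.mp (hcsupp j hj)) this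
    · exact Or.inl h1
    · exact Or.inr h2
  -- the step indicator and counting functions
  set e : ℕ → Bool := fun k =>
    decide (((σ (f k) : ℕ) : ZMod p) - ((f k : ℕ) : ZMod p) = (q₁ : ZMod p)) with he
  set P : ℕ → ℕ := fun k => ((Finset.range k).filter fun t => e t = true).card with hP
  have hP0 : P 0 = 0 := by simp [hP]
  have hPle : ∀ k, P k ≤ k := by
    intro k
    calc P k ≤ (Finset.range k).card := Finset.card_filter_le _ _
    _ = k := Finset.card_range k
  have hnotmem : ∀ k : ℕ, k ∉ (Finset.range k).filter fun t => e t = true := by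
    intro k hk
    simp at hk
  have hPsucc_t : ∀ k, e k = true → P (k + 1) = P k + 1 := by
    intro k hk
    simp only [hP, Finset.range_add_one, Finset.filter_insert, hk, if_pos]
    rw [Finset.card_insert_of_notMem (hnotmem k)]
  have hPsucc_f : ∀ k, e k = false → P (k + 1) = P k := by
    intro k hk
    simp only [hP, Finset.range_add_one, Finset.filter_insert, hk]
    simp
  have hPstep : ∀ k, P (k + 1) = P k ∨ P (k + 1) = P k + 1 := by
    intro k
    cases hek : e k
    · exact Or.inl (hPsucc_f k hek)
    · exact Or.inr (hPsucc_t k hek)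
  set S : ℕ → ℕ := fun k => P k * q₁ + (k - P k) * q₂ with hSdef
  have hS : ∀ k, S k = P k * q₁ + (k - P k) * q₂ := fun k => rfl
  -- partial sums track the positions
  have hSf : ∀ k, ((f k : ℕ) : ZMod p) = ((x : ℕ) : ZMod p) + (S k : ZMod p) := by
    intro k
    induction k with
    | zero => simp [hf, hSdef, hP0]
    | succ k ih =>
      have hfk := hmem k
      rcases hstepA (f k) hfk with h1 | h2
      · have hek : e k = true := by rw [he]; exact decide_eq_true h1
        have hSk : S (k + 1) = S k + q₁ := by
          rw [hS (k+1), hS k, hPsucc_t k hek]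
          have h3 : k + 1 - (P k + 1) = k - P k := by omega
          rw [h3]; ring
        have hσf : ((σ (f k) : ℕ) : ZMod p) = ((f k : ℕ) : ZMod p) + (q₁ : ZMod p) := by
          rw [← h1]; ring
        rw [← hfs k, hσf, ih, hSk]
        push_cast
        ring
      · have hek : e k = false := by
          rw [he]
          simp only [decide_eq_false_iff_not]
          rw [h2]
          exact fun hcontra => hq12 hcontra.symm
        have hSk : S (k + 1) = S k + q₂ := by
          rw [hS (k+1), hS k, hPsucc_f k hek]
          have h3 : k + 1 - P k = (k - P k) + 1 := by have := hPle k; omega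
          rw [h3]; ring
        have hσf : ((σ (f k) : ℕ) : ZMod p) = ((f k : ℕ) : ZMod p) + (q₂ : ZMod p) := by
          rw [← h2]; ring
        rw [← hfs k, hσf, ih, hSk]
        push_cast
        ring
  have hSinj : ∀ i < n, ∀ j < n, ((S i : ZMod p) = (S j : ZMod p)) → i = j := by
    intro i hi j hj hij
    apply hinj i hi j hj
    apply hcastinj
    rw [hSf i, hSf j, hij]
  -- S n is divisible by p
  have hfn : f n = x := by
    rw [← hfc n]
    have : c ^ n = 1 := by
      rw [hn, ← hcyc.orderOf]
      exact pow_orderOf_eq_one c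
    rw [this]; rfl
  have hSn0 : (S n : ZMod p) = 0 := by
    have := hSf n
    rw [hfn] at this
    exact (left_eq_add.mp this)
  have hdvd : p ∣ S n := (ZMod.natCast_eq_zero_iff _ _).mp hSn0
  set l : ℕ := S n / p with hldef
  have hl : S n = l * p := by rw [hldef, Nat.div_mul_cancel hdvd]
  -- identify the two filter cardinalities
  have hcard1 : (c.support.filter fun j : Fin p =>
      ((σ j : ℕ) : ZMod p) - ((j : ℕ) : ZMod p) = (q₁ : ZMod p)).card = P n := by
    rw [← himage, Finset.filter_image]
    rw [Finset.card_image_of_injOn (fun i hi j hj => by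
      have hi' := Finset.mem_range.mp (Finset.mem_filter.mp hi).1
      have hj' := Finset.mem_range.mp (Finset.mem_filter.mp hj).1
      exact hinj i hi' j hj')]
    rw [hP]
    congr 1
    apply Finset.filter_congr
    intro k _
    rw [he]
    simp
  have hcard2 : (c.support.filter fun j : Fin p =>
      ((σ j : ℕ) : ZMod p) - ((j : ℕ) : ZMod p) = (q₂ : ZMod p)).card = n - P n := by
    rw [← himage, Finset.filter_image]
    rw [Finset.card_image_of_injOn (fun i hi j hj => by
      have hi' := Finset.mem_range.mp (Finset.mem_filter.mp hi).1
      have hj' := Finset.mem_range.mp (Finset.mem_filter.mp hj).1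
      exact hinj i hi' j hj')]
    have hiff : ∀ k ∈ Finset.range n,
        ((((σ (f k) : ℕ) : ZMod p) - ((f k : ℕ) : ZMod p) = (q₂ : ZMod p)) ↔ ¬(e k = true)) := by
      intro k _
      rw [he]
      simp only [decide_eq_true_eq]
      constructor
      · intro h2 h1
        exact hq12 (h1.symm.trans h2)
      · intro h1
        rcases hstepA (f k) (hmem k) with ha | hb
        · exact absurd ha h1
        · exact hb
    rw [Finset.filter_congr hiff]
    have := Finset.card_filter_add_card_filter_not
      (s := Finset.range n) (p := fun k => e k = true)
    rw [Finset.card_range] at this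
    simp only [hP]
    omega
  rw [hcard1, hcard2]
  have hfinal : (P n * q₁ + (n - P n) * q₂) / p = l := by
    rw [← hS n, hl, Nat.mul_div_cancel _ hp]
  rw [hfinal]
  exact key p q₁ q₂ n l hp hn0 P hP0 hPstep S hS hSinj hl
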